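/- For every Δt₀ ∈ (0,1] there exists a constant C(Δt₀) ∈ (0,∞) such that |Ψ_t(z) − Ψ_0(z)| ≤ C(Δt₀) t (1 + |z|⁵) for all t ∈ [0,Δt₀] and all z ∈ ℝ. -/

import Mathlib

noncomputable section

/-- The flow map `Φ_t(z) = z / √(z² + (1 - z²) e^{-2t})` of the ODE `ż = z - z³`. -/
def Phi (t z : ℝ) : ℝ := z / Real.sqrt (z ^ 2 + (1 - z ^ 2) * Real.exp (-2 * t))

/-- `Ψ_t(z) = (Φ_t(z) - z)/t` for `t > 0`, and `Ψ_0(z) = z - z³`. -/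
def Psi (t z : ℝ) : ℝ := if t = 0 then z - z ^ 3 else (Phi t z - z) / t

private lemma aux_quintic (a : ℝ) (ha : 0 ≤ a) : a * (1 + a ^ 2) ^ 2 ≤ 4 * (1 + a ^ 5) := by
  nlinarith [sq_nonneg (a - 1), sq_nonneg (a ^ 2 - 1), mul_nonneg ha (sq_nonneg (a ^ 2 - 1)),
    mul_nonneg (mul_nonneg ha ha) (sq_nonneg (a - 1)), mul_nonneg ha (sq_nonneg (a - 1))]

set_option maxHeartbeats 1000000 in
/-- For every `Δt₀ ∈ (0,1]` there exists `C(Δt₀) ∈ (0,∞)` such that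
`|Ψ_t(z) - Ψ_0(z)| ≤ C(Δt₀) t (1 + |z|⁵)` for all `t ∈ [0, Δt₀]` and all `z ∈ ℝ`. -/
theorem psi_minus_psi_zero_bound (Δt₀ : ℝ) (hΔt₀ : Δt₀ ∈ Set.Ioc (0 : ℝ) 1) :
    ∃ C : ℝ, 0 < C ∧ ∀ t ∈ Set.Icc (0 : ℝ) Δt₀, ∀ z : ℝ,
      |Psi t z - Psi 0 z| ≤ C * t * (1 + |z| ^ 5) := by
  refine ⟨100, by norm_num, ?_⟩
  rintro t ⟨ht0, htub⟩ z
  rcases eq_or_lt_of_le ht0 with h | ht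
  · simp [← h]
  have ht1 : t ≤ 1 := htub.trans hΔt₀.2
  have htne : t ≠ 0 := ne_of_gt ht
  set e := Real.exp (-2 * t) with he
  have he_pos : 0 < e := Real.exp_pos _
  have he_le1 : e ≤ 1 := by
    calc e ≤ Real.exp 0 := Real.exp_le_exp.mpr (by linarith)
      _ = 1 := Real.exp_zero
  have he_lb : 1 - 2 * t ≤ e := by
    have h := Real.add_one_le_exp (-2 * t)
    rw [← he] at h; linarith
  have hmul : e * Real.exp (2 * t) = 1 := by
    rw [he, ← Real.exp_add]; norm_num
  have he_ub : e ≤ 1 - 2 * t + 4 * t ^ 2 := by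
    have h1 : 1 + 2 * t ≤ Real.exp (2 * t) := by
      linarith [Real.add_one_le_exp (2 * t)]
    have h2 : e * (1 + 2 * t) ≤ 1 := by
      calc e * (1 + 2 * t) ≤ e * Real.exp (2 * t) :=
            mul_le_mul_of_nonneg_left h1 he_pos.le
        _ = 1 := hmul
    have h3 : 2 * t * (1 - 2 * t) ≤ 2 * t * e :=
      mul_le_mul_of_nonneg_left he_lb (by linarith)
    nlinarith
  set s := 1 - e with hs
  have hs0 : 0 ≤ s := by simp only [hs]; linarith
  have hs2t : s ≤ 2 * t := by simp only [hs]; linarith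
  have hz2s : 0 ≤ z ^ 2 * (1 - e) := mul_nonneg (sq_nonneg z) (by linarith)
  set u := z ^ 2 + (1 - z ^ 2) * e with hu
  have hu_pos : 0 < u := by rw [hu]; nlinarith
  have hexp2 : Real.exp (2 : ℝ) < 9 := by
    have h1 : Real.exp (2 : ℝ) = Real.exp 1 * Real.exp 1 := by
      rw [← Real.exp_add]; norm_num
    nlinarith [Real.exp_one_lt_d9, Real.exp_pos (1 : ℝ)]
  have he_lb9 : (1 : ℝ) / 9 ≤ e := by
    have h1 : Real.exp (-2 : ℝ) ≤ e := by
      rw [he]; exact Real.exp_le_exp.mpr (by linarith)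
    have h2 : Real.exp (-2 : ℝ) * Real.exp (2 : ℝ) = 1 := by
      rw [← Real.exp_add]; norm_num
    have h3 : Real.exp (-2 : ℝ) * Real.exp (2 : ℝ) < Real.exp (-2 : ℝ) * 9 :=
      mul_lt_mul_of_pos_left hexp2 (Real.exp_pos _)
    linarith
  have hu9 : (1 : ℝ) / 9 ≤ u := by rw [hu]; nlinarith
  set r := Real.sqrt u with hr
  have hr2 : r ^ 2 = u := Real.sq_sqrt hu_pos.le
  have hr_pos : 0 < r := Real.sqrt_pos.mpr hu_pos
  have hr3 : (1 : ℝ) / 3 ≤ r := by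
    rw [hr, show (1 : ℝ) / 3 = Real.sqrt (1 / 9) by
      rw [show (1 : ℝ) / 9 = (1 / 3) ^ 2 by norm_num, Real.sqrt_sq (by norm_num)]]
    exact Real.sqrt_le_sqrt hu9
  have hrne : r ≠ 0 := ne_of_gt hr_pos
  have h1u : 1 - u = (1 - z ^ 2) * s := by rw [hu, hs]; ring
  have hPhi : Phi t z = z / r := by rw [Phi, hr, hu, he]
  have hden_pos : (0 : ℝ) < r * (1 + r) := mul_pos hr_pos (by linarith)
  have hE : Phi t z - z - t * (z - z ^ 3) =
      z * (1 - z ^ 2) * (s - t * (r + r ^ 2)) / (r * (1 + r)) := by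
    rw [hPhi]
    have h1r : (1 : ℝ) + r ≠ 0 := by positivity
    field_simp
    linear_combination (-z) * hr2 + (z * (r - 1)) * hu
  have habs_z2 : |1 - z ^ 2| ≤ 1 + z ^ 2 := by
    rcases abs_cases (1 - z ^ 2) with ⟨h, _⟩ | ⟨h, _⟩ <;> linarith [sq_nonneg z]
  have habs_u : |1 - u| ≤ 2 * t * (1 + z ^ 2) := by
    rw [h1u, abs_mul, abs_of_nonneg hs0]
    calc |1 - z ^ 2| * s ≤ (1 + z ^ 2) * (2 * t) :=
          mul_le_mul habs_z2 hs2t hs0 (by positivity)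
      _ = 2 * t * (1 + z ^ 2) := by ring
  have habs_r : |1 - r| ≤ |1 - u| := by
    have h1 : (1 - r) * (1 + r) = 1 - u := by linear_combination -hr2
    calc |1 - r| ≤ |1 - r| * (1 + r) :=
          le_mul_of_one_le_right (abs_nonneg _) (by linarith)
      _ = |(1 - r) * (1 + r)| := by
          rw [abs_mul, abs_of_pos (show (0 : ℝ) < 1 + r by linarith)]
      _ = |1 - u| := by rw [h1]
  have habs_s2t : |s - 2 * t| ≤ 4 * t ^ 2 := by
    rw [abs_le]
    constructor <;> linarith [sq_nonneg t]
  have hru : |1 - r| ≤ 2 * t * (1 + z ^ 2) := habs_r.trans habs_u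
  have hstep : |s - t * (r + r ^ 2)| ≤ 8 * t ^ 2 * (1 + z ^ 2) := by
    have hid : s - t * (r + r ^ 2) = (s - 2 * t) + t * ((1 - r) + (1 - u)) := by
      linear_combination (-t) * hr2
    rw [hid]
    calc |(s - 2 * t) + t * ((1 - r) + (1 - u))|
        ≤ |s - 2 * t| + |t * ((1 - r) + (1 - u))| := abs_add_le _ _
      _ = |s - 2 * t| + t * |(1 - r) + (1 - u)| := by rw [abs_mul, abs_of_pos ht]
      _ ≤ |s - 2 * t| + t * (|1 - r| + |1 - u|) :=
          add_le_add_right (mul_le_mul_of_nonneg_left (abs_add_le _ _) ht.le) _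
      _ ≤ 4 * t ^ 2 + t * (2 * t * (1 + z ^ 2) + 2 * t * (1 + z ^ 2)) :=
          add_le_add habs_s2t (mul_le_mul_of_nonneg_left (add_le_add hru habs_u) ht.le)
      _ ≤ 8 * t ^ 2 * (1 + z ^ 2) := by
          nlinarith [mul_nonneg (sq_nonneg t) (sq_nonneg z)]
  have hden : (1 : ℝ) / 3 ≤ r * (1 + r) := by
    have h := mul_le_mul hr3 (show (1 : ℝ) ≤ 1 + r by linarith) zero_le_one hr_pos.le
    linarith
  have hE_abs : |Phi t z - z - t * (z - z ^ 3)| ≤ 24 * t ^ 2 * (|z| * (1 + z ^ 2) ^ 2) := by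
    rw [hE, abs_div, abs_mul, abs_mul, abs_of_pos hden_pos, div_le_iff₀ hden_pos]
    have h1 : |z| * |1 - z ^ 2| * |s - t * (r + r ^ 2)| ≤
        |z| * (1 + z ^ 2) * (8 * t ^ 2 * (1 + z ^ 2)) :=
      mul_le_mul (mul_le_mul le_rfl habs_z2 (abs_nonneg _) (abs_nonneg _)) hstep
        (abs_nonneg _) (by positivity)
    have h2 := mul_le_mul_of_nonneg_left hden
      (show (0 : ℝ) ≤ 24 * (t ^ 2 * (|z| * (1 + z ^ 2) ^ 2)) by positivity)
    linarith [h1, h2]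
  have hPsi : Psi t z - Psi 0 z = (Phi t z - z - t * (z - z ^ 3)) / t := by
    rw [Psi, Psi, if_neg htne, if_pos rfl]
    field_simp
  rw [hPsi, abs_div, abs_of_pos ht, div_le_iff₀ ht]
  have hzabs : |z| * (1 + z ^ 2) ^ 2 ≤ 4 * (1 + |z| ^ 5) := by
    have h := aux_quintic |z| (abs_nonneg z)
    rw [← sq_abs z]
    exact h
  have h5 : (0 : ℝ) ≤ 1 + |z| ^ 5 := by positivity
  calc |Phi t z - z - t * (z - z ^ 3)| ≤ 24 * t ^ 2 * (|z| * (1 + z ^ 2) ^ 2) := hE_abs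
    _ ≤ 24 * t ^ 2 * (4 * (1 + |z| ^ 5)) := by
        have h := mul_le_mul_of_nonneg_left hzabs (show (0 : ℝ) ≤ 24 * t ^ 2 by positivity)
        linarith
    _ ≤ 100 * t * (1 + |z| ^ 5) * t := by
        nlinarith [sq_nonneg t, mul_nonneg (sq_nonneg t) (pow_nonneg (abs_nonneg z) 5)]

end
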